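/- arXiv:1512.02016 — 5 statements merged into one kernel-verified Lean document; each statement's English description precedes it below -/
import Mathlib

section
/- For every real number c > 0 and every real number ζ, the following scale-mixture identity holds: exp(−2c·max(0, ζ)) = ∫₀^∞ (2πλ)^{−1/2} · exp(−(λ + cζ)²/(2λ)) dλ, where the integral is over λ ∈ (0, ∞) with respect to Lebesgue measure. -/
open MeasureTheory Real

namespace HingeAux

/-- The map `t ↦ t - b/t` sends `(0,∞)` onto `ℝ`. -/
lemma image_sub_div (b : ℝ) (hb : 0 < b) :
    (fun t : ℝ => t - b / t) '' Set.Ioi 0 = Set.univ := by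
  apply Set.eq_univ_of_forall
  intro y
  have hs0 : (0:ℝ) ≤ y ^ 2 + 4 * b := by positivity
  have hs2 : Real.sqrt (y ^ 2 + 4 * b) ^ 2 = y ^ 2 + 4 * b := Real.sq_sqrt hs0
  have hsy : |y| < Real.sqrt (y ^ 2 + 4 * b) := by
    have : Real.sqrt (y ^ 2) < Real.sqrt (y ^ 2 + 4 * b) := by
      apply Real.sqrt_lt_sqrt (by positivity)
      linarith
    simpa [Real.sqrt_sq_eq_abs] using this
  set s := Real.sqrt (y ^ 2 + 4 * b) with hsdef
  have ht0 : 0 < (y + s) / 2 := by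
    have := neg_abs_le y
    linarith
  refine ⟨(y + s) / 2, ht0, ?_⟩
  have hne : (y + s) / 2 ≠ 0 := ne_of_gt ht0
  have hbd : b / ((y + s) / 2) = (s - y) / 2 := by
    rw [div_eq_iff hne]
    nlinarith [hs2]
  simp only [hbd]
  ring

lemma derivWithin_sub_div (b : ℝ) :
    ∀ t ∈ Set.Ioi (0:ℝ),
      HasDerivWithinAt (fun t : ℝ => t - b / t) (1 + b / t ^ 2) (Set.Ioi 0) t := by
  intro t ht
  have ht0 : t ≠ 0 := ne_of_gt ht
  have h := ((hasDerivAt_id t).sub ((hasDerivAt_const t b).div (hasDerivAt_id t) ht0))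
  simp only [id] at h
  have he : (1:ℝ) - (0 * t - b * 1) / t ^ 2 = 1 + b / t ^ 2 := by
    field_simp
    ring
  rw [he] at h
  exact h.hasDerivWithinAt

lemma injOn_sub_div (b : ℝ) (hb : 0 < b) :
    Set.InjOn (fun t : ℝ => t - b / t) (Set.Ioi 0) := by
  intro x hx y hy h
  simp only at h
  have hx0 : (0:ℝ) < x := hx
  have hy0 : (0:ℝ) < y := hy
  have : (x - y) * (1 + b / (x * y)) = 0 := by
    field_simp at h ⊢
    nlinarith [h]
  have hpos : 0 < 1 + b / (x * y) := by positivity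
  have := mul_eq_zero.1 this
  rcases this with h1 | h1
  · linarith
  · linarith

lemma image_div (b : ℝ) (hb : 0 < b) :
    (fun t : ℝ => b / t) '' Set.Ioi 0 = Set.Ioi 0 := by
  apply Set.Subset.antisymm
  · rintro _ ⟨t, ht, rfl⟩
    exact div_pos hb ht
  · intro y hy
    exact ⟨b / y, div_pos hb hy, by field_simp⟩

lemma derivWithin_div (b : ℝ) :
    ∀ t ∈ Set.Ioi (0:ℝ),
      HasDerivWithinAt (fun t : ℝ => b / t) (-(b / t ^ 2)) (Set.Ioi 0) t := by
  intro t ht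
  have ht0 : t ≠ 0 := ne_of_gt ht
  have h := (hasDerivAt_const t b).div (hasDerivAt_id t) ht0
  simp only [id] at h
  have he : (0 * t - b * 1) / t ^ 2 = -(b / t ^ 2) := by field_simp; ring
  rw [he] at h
  exact h.hasDerivWithinAt

lemma injOn_div (b : ℝ) (hb : 0 < b) :
    Set.InjOn (fun t : ℝ => b / t) (Set.Ioi 0) := by
  intro x hx y hy h
  simp only at h
  have hx0 : (0:ℝ) < x := hx
  have hy0 : (0:ℝ) < y := hy
  field_simp at h
  rcases h with h | h
  · rfl

lemma gaussian_eq (b : ℝ) (hb : 0 < b) :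
    ∫ u : ℝ, Real.exp (-u ^ 2 / 2) =
      ∫ t in Set.Ioi (0:ℝ), |1 + b / t ^ 2| * Real.exp (-(t - b / t) ^ 2 / 2) := by
  have h := integral_image_eq_integral_abs_deriv_smul measurableSet_Ioi
    (derivWithin_sub_div b) (injOn_sub_div b hb) (fun u => Real.exp (-u ^ 2 / 2))
  rw [image_sub_div b hb] at h
  simpa [smul_eq_mul] using h

lemma reflect_eq (b : ℝ) (hb : 0 < b) :
    ∫ t in Set.Ioi (0:ℝ), Real.exp (-(t - b / t) ^ 2 / 2) =
      ∫ t in Set.Ioi (0:ℝ), (b / t ^ 2) * Real.exp (-(t - b / t) ^ 2 / 2) := by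
  have h := integral_image_eq_integral_abs_deriv_smul measurableSet_Ioi
    (derivWithin_div b) (injOn_div b hb)
    (fun u => Real.exp (-(u - b / u) ^ 2 / 2))
  rw [image_div b hb] at h
  rw [h]
  apply setIntegral_congr_fun measurableSet_Ioi
  intro t ht
  have ht0 : (0:ℝ) < t := ht
  have h1 : |-(b / t ^ 2)| = b / t ^ 2 := by
    rw [abs_neg, abs_of_pos (by positivity)]
  have h2 : b / t - b / (b / t) = -(t - b / t) := by
    rw [div_div_eq_mul_div, mul_div_assoc, mul_comm]
    rw [div_mul_eq_mul_div, mul_div_assoc, div_self (ne_of_gt hb)]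
    ring
  simp only [smul_eq_mul, h1, h2]
  rw [neg_sq]

lemma integrableF (b : ℝ) (hb : 0 < b) :
    IntegrableOn (fun t => (1 + b / t ^ 2) * Real.exp (-(t - b / t) ^ 2 / 2))
      (Set.Ioi (0:ℝ)) := by
  have hg : Integrable (fun u : ℝ => Real.exp (-u ^ 2 / 2)) := by
    have h := integrable_exp_neg_mul_sq (show (0:ℝ) < 1/2 by norm_num)
    convert h using 2 with u
    ring_nf
  have h := (integrableOn_image_iff_integrableOn_abs_deriv_smul measurableSet_Ioi
    (derivWithin_sub_div b) (injOn_sub_div b hb)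
    (fun u => Real.exp (-u ^ 2 / 2))).1 (by rw [image_sub_div b hb]; exact hg.integrableOn)
  apply h.congr_fun ?_ measurableSet_Ioi
  intro t ht
  have ht0 : (0:ℝ) < t := ht
  have : |1 + b / t ^ 2| = 1 + b / t ^ 2 := abs_of_pos (by positivity)
  simp [smul_eq_mul, this]

lemma contOn_f1 (b : ℝ) :
    ContinuousOn (fun t : ℝ => Real.exp (-(t - b / t) ^ 2 / 2)) (Set.Ioi 0) := by
  apply Real.continuous_exp.comp_continuousOn
  apply ContinuousOn.div_const
  apply ContinuousOn.neg
  apply ContinuousOn.pow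
  exact continuousOn_id.sub (continuousOn_const.div continuousOn_id
    (fun t ht => ne_of_gt ht))

lemma integrable_f1 (b : ℝ) (hb : 0 < b) :
    IntegrableOn (fun t => Real.exp (-(t - b / t) ^ 2 / 2)) (Set.Ioi (0:ℝ)) := by
  apply Integrable.mono (integrableF b hb)
  · exact ((contOn_f1 b).aestronglyMeasurable measurableSet_Ioi)
  · rw [ae_restrict_iff' measurableSet_Ioi]
    filter_upwards with t ht
    have ht0 : (0:ℝ) < t := ht
    have he : (0:ℝ) < Real.exp (-(t - b / t) ^ 2 / 2) := Real.exp_pos _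
    rw [Real.norm_eq_abs, Real.norm_eq_abs, abs_of_pos he, abs_of_pos (by positivity)]
    nlinarith [div_pos hb (pow_pos ht0 2)]

lemma integrable_f2 (b : ℝ) (hb : 0 < b) :
    IntegrableOn (fun t => (b / t ^ 2) * Real.exp (-(t - b / t) ^ 2 / 2))
      (Set.Ioi (0:ℝ)) := by
  apply Integrable.mono (integrableF b hb)
  · apply ContinuousOn.aestronglyMeasurable _ measurableSet_Ioi
    exact (continuousOn_const.div (continuousOn_pow 2)
      (fun t ht => pow_ne_zero 2 (ne_of_gt ht))).mul (contOn_f1 b)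
  · rw [ae_restrict_iff' measurableSet_Ioi]
    filter_upwards with t ht
    have ht0 : (0:ℝ) < t := ht
    have he : (0:ℝ) < Real.exp (-(t - b / t) ^ 2 / 2) := Real.exp_pos _
    have hq : (0:ℝ) < b / t ^ 2 := div_pos hb (pow_pos ht0 2)
    rw [Real.norm_eq_abs, Real.norm_eq_abs, abs_of_pos (by positivity),
      abs_of_pos (by positivity)]
    nlinarith

lemma gauss_total : ∫ u : ℝ, Real.exp (-u ^ 2 / 2) = Real.sqrt (2 * Real.pi) := by
  have h := integral_gaussian (1/2 : ℝ)
  have : ∀ u : ℝ, Real.exp (-(1/2 : ℝ) * u ^ 2) = Real.exp (-u ^ 2 / 2) := by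
    intro u; ring_nf
  simp only [this] at h
  rw [h]
  norm_num [mul_comm]

lemma keyG (b : ℝ) (hb : 0 < b) :
    ∫ t in Set.Ioi (0:ℝ), Real.exp (-(t - b / t) ^ 2 / 2)
      = Real.sqrt (2 * Real.pi) / 2 := by
  have h1 := gaussian_eq b hb
  rw [gauss_total] at h1
  have h2 : ∫ t in Set.Ioi (0:ℝ), |1 + b / t ^ 2| * Real.exp (-(t - b / t) ^ 2 / 2)
      = (∫ t in Set.Ioi (0:ℝ), Real.exp (-(t - b / t) ^ 2 / 2))
        + ∫ t in Set.Ioi (0:ℝ), (b / t ^ 2) * Real.exp (-(t - b / t) ^ 2 / 2) := by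
    rw [← integral_add (integrable_f1 b hb) (integrable_f2 b hb)]
    apply setIntegral_congr_fun measurableSet_Ioi
    intro t ht
    have ht0 : (0:ℝ) < t := ht
    dsimp only
    rw [abs_of_pos (by positivity)]
    ring
  rw [h2, ← reflect_eq b hb] at h1
  linarith

lemma keyJ (a : ℝ) :
    ∫ t in Set.Ioi (0:ℝ), Real.exp (-(t + a / t) ^ 2 / 2)
      = Real.sqrt (2 * Real.pi) / 2 * Real.exp (-2 * max 0 a) := by
  rcases lt_trichotomy a 0 with h | h | h
  · have hb : 0 < -a := by linarith
    have hc : ∀ t ∈ Set.Ioi (0:ℝ),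
        Real.exp (-(t + a / t) ^ 2 / 2) = Real.exp (-(t - (-a) / t) ^ 2 / 2) := by
      intro t ht
      congr 1
      ring
    rw [setIntegral_congr_fun measurableSet_Ioi hc, keyG (-a) hb, max_eq_left h.le]
    simp
  · subst h
    have h := integral_gaussian_Ioi (1/2 : ℝ)
    have he : ∀ t : ℝ, Real.exp (-(1/2 : ℝ) * t ^ 2) = Real.exp (-(t + 0 / t) ^ 2 / 2) := by
      intro t; rw [zero_div, add_zero]; ring_nf
    simp only [he] at h
    rw [h]
    norm_num [mul_comm]
  · rw [max_eq_right h.le]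
    have hkey := keyG a h
    have hc : ∀ t ∈ Set.Ioi (0:ℝ),
        Real.exp (-(t + a / t) ^ 2 / 2)
          = Real.exp (-2 * a) * Real.exp (-(t - a / t) ^ 2 / 2) := by
      intro t ht
      have ht0 : t ≠ 0 := ne_of_gt ht
      rw [← Real.exp_add]
      congr 1
      field_simp
      ring
    rw [setIntegral_congr_fun measurableSet_Ioi hc, integral_const_mul, hkey]
    ring

lemma image_sq : (fun t : ℝ => t ^ 2) '' Set.Ioi 0 = Set.Ioi 0 := by
  apply Set.Subset.antisymm
  · rintro _ ⟨t, ht, rfl⟩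
    exact pow_pos (Set.mem_Ioi.mp ht) 2
  · intro l hl
    have hl0 : (0:ℝ) < l := hl
    exact ⟨Real.sqrt l, Real.sqrt_pos.2 hl0, Real.sq_sqrt hl0.le⟩

lemma deriv_sq : ∀ t ∈ Set.Ioi (0:ℝ),
    HasDerivWithinAt (fun t : ℝ => t ^ 2) (2 * t) (Set.Ioi 0) t := by
  intro t ht
  have h := hasDerivAt_pow 2 t
  norm_num at h
  exact h.hasDerivWithinAt

lemma injOn_sq : Set.InjOn (fun t : ℝ => t ^ 2) (Set.Ioi 0) := by
  intro x hx y hy h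
  simp only at h
  have hx0 : (0:ℝ) < x := hx
  have hy0 : (0:ℝ) < y := hy
  nlinarith

end HingeAux

open HingeAux in
/-- Scale-mixture-of-Gaussians representation of the exponentiated hinge loss
`exp (-2c·(ζ)₊)` (Polson–Scott data augmentation, hinge-loss case of Lemma 1). -/
theorem exp_neg_two_mul_max_eq_integral (c ζ : ℝ) (hc : 0 < c) :
    Real.exp (-2 * c * max 0 ζ) =
      ∫ l in Set.Ioi (0 : ℝ),
        (2 * Real.pi * l) ^ (-(1 : ℝ) / 2) * Real.exp (-(l + c * ζ) ^ 2 / (2 * l)) := by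
  set a := c * ζ with ha
  have hmax : c * max 0 ζ = max 0 a := by
    rw [ha, mul_max_of_nonneg _ _ hc.le, mul_zero]
  have h := integral_image_eq_integral_abs_deriv_smul measurableSet_Ioi
    deriv_sq injOn_sq
    (fun l => (2 * Real.pi * l) ^ (-(1 : ℝ) / 2) * Real.exp (-(l + a) ^ 2 / (2 * l)))
  rw [image_sq] at h
  have hsim : ∀ t ∈ Set.Ioi (0:ℝ),
      |2 * t| • ((2 * Real.pi * t ^ 2) ^ (-(1 : ℝ) / 2)
          * Real.exp (-(t ^ 2 + a) ^ 2 / (2 * t ^ 2)))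
        = (2 / Real.sqrt (2 * Real.pi)) * Real.exp (-(t + a / t) ^ 2 / 2) := by
    intro t ht
    have ht0 : (0:ℝ) < t := ht
    have hbase : (0:ℝ) < 2 * Real.pi * t ^ 2 := by positivity
    have hrp : (2 * Real.pi * t ^ 2) ^ (-(1 : ℝ) / 2)
        = (Real.sqrt (2 * Real.pi) * t)⁻¹ := by
      rw [show (-(1:ℝ)/2) = -(1/2 : ℝ) by norm_num, Real.rpow_neg hbase.le,
        ← Real.sqrt_eq_rpow, Real.sqrt_mul (by positivity), Real.sqrt_sq ht0.le]
    have hexp : -(t ^ 2 + a) ^ 2 / (2 * t ^ 2) = -(t + a / t) ^ 2 / 2 := by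
      field_simp
    rw [smul_eq_mul, hrp, hexp, abs_of_pos (by positivity)]
    have hs : (0:ℝ) < Real.sqrt (2 * Real.pi) := Real.sqrt_pos.2 (by positivity)
    field_simp
  rw [setIntegral_congr_fun measurableSet_Ioi hsim, integral_const_mul, keyJ a] at h
  have hs : (0:ℝ) < Real.sqrt (2 * Real.pi) := Real.sqrt_pos.2 (by positivity)
  rw [h, show -2 * c * max 0 ζ = -2 * max 0 a by rw [mul_assoc, hmax]]
  field_simp
end

section
/- Let y ∈ {−1, 1}, let c > 0, and let ℓ, ω be real numbers. Then exp(−2c·max(0, ℓ − yω)) = (2π)^{−1/2} e^{−cℓ} · ∫₀^∞ λ^{−1/2} · exp(−(λ + c²ℓ²/λ)/2) · exp(κ(λ)·ω − ρ(λ)·ω²/2) dλ, where κ(λ) = cy(1 + cℓ/λ) and ρ(λ) = c²/λ, and the integral is over λ ∈ (0, ∞) with respect to Lebesgue measure. -/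
open MeasureTheory Real
open Set

-- integrability of the shifted gaussian
lemma aux_integrable_f (a : ℝ) (ha : 0 ≤ a) :
    IntegrableOn (fun t : ℝ => Real.exp (-(t - a/t)^2/2)) (Ioi 0) := by
  have hmeas : AEStronglyMeasurable (fun t : ℝ => Real.exp (-(t - a/t)^2/2))
      (volume.restrict (Ioi 0)) := by
    refine ContinuousOn.aestronglyMeasurable ?_ measurableSet_Ioi
    refine Real.continuous_exp.comp_continuousOn ?_
    have h1 : ContinuousOn (fun t : ℝ => t - a/t) (Ioi 0) :=
      continuousOn_id.sub (continuousOn_const.div continuousOn_id (fun t ht => ne_of_gt ht))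
    exact ((h1.pow 2).neg).div_const 2
  have hint : Integrable (fun t : ℝ => Real.exp a * Real.exp (-(1/2 : ℝ) * t^2)) :=
    (integrable_exp_neg_mul_sq (by norm_num)).const_mul _
  refine Integrable.mono (hint.integrableOn) hmeas ?_
  filter_upwards [ae_restrict_mem measurableSet_Ioi] with t ht
  have ht0 : (0:ℝ) < t := ht
  rw [Real.norm_eq_abs, Real.norm_eq_abs, abs_of_pos (Real.exp_pos _),
    abs_of_pos (by positivity), ← Real.exp_add]
  apply Real.exp_le_exp.2
  have key : (t - a/t)^2 ≥ t^2 - 2*a := by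
    have h2 : (t - a/t)^2 = t^2 - 2*a + (a/t)^2 := by field_simp; ring
    nlinarith [sq_nonneg (a/t)]
  nlinarith

-- image of Ioi 0 under t ↦ a/t
lemma aux_inv_image (a : ℝ) (ha : 0 < a) : (fun t : ℝ => a / t) '' (Ioi 0) = Ioi 0 := by
  ext u
  constructor
  · rintro ⟨t, ht, rfl⟩
    exact div_pos ha ht
  · intro hu
    exact ⟨a / u, div_pos ha hu, by field_simp⟩

lemma aux_inv_deriv (a : ℝ) : ∀ t ∈ Ioi (0:ℝ),
    HasDerivWithinAt (fun t : ℝ => a / t) (-(a / t^2)) (Ioi 0) t := by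
  intro t ht
  have h : HasDerivAt (fun t : ℝ => a / t) ((0 * t - a * 1) / t^2) t :=
    (hasDerivAt_const t a).div (hasDerivAt_id t) (ne_of_gt ht)
  rw [show -(a / t^2) = (0 * t - a * 1) / t^2 by ring]
  exact h.hasDerivWithinAt

lemma aux_inv_inj (a : ℝ) (ha : 0 < a) : InjOn (fun t : ℝ => a / t) (Ioi 0) := by
  intro s hs t ht h
  have hs0 := ne_of_gt (show (0:ℝ) < s from hs)
  have ht0 := ne_of_gt (show (0:ℝ) < t from ht)
  have h' : a / s = a / t := h
  rw [div_eq_div_iff hs0 ht0] at h'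
  exact (mul_left_cancel₀ (ne_of_gt ha) h').symm

-- substitution t ↦ a/t in the shifted gaussian
lemma aux_inv_subst (a : ℝ) (ha : 0 < a) :
    ∫ t in Ioi (0:ℝ), Real.exp (-(t - a/t)^2/2)
      = ∫ t in Ioi (0:ℝ), (a / t^2) * Real.exp (-(t - a/t)^2/2) := by
  conv_lhs => rw [← aux_inv_image a ha]
  rw [integral_image_eq_integral_abs_deriv_smul measurableSet_Ioi (aux_inv_deriv a)
    (aux_inv_inj a ha)]
  refine setIntegral_congr_fun measurableSet_Ioi (fun t ht => ?_)
  have ht0 : (0:ℝ) < t := ht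
  have h1 : |(-(a / t^2))| = a / t^2 := by
    rw [abs_neg, abs_of_pos (by positivity)]
  rw [smul_eq_mul, h1]
  congr 2
  have : a / (a / t) = t := by field_simp
  rw [this]
  ring

lemma aux_inv_integrable (a : ℝ) (ha : 0 < a)
    (hf : IntegrableOn (fun t : ℝ => Real.exp (-(t - a/t)^2/2)) (Ioi 0)) :
    IntegrableOn (fun t : ℝ => (a / t^2) * Real.exp (-(t - a/t)^2/2)) (Ioi 0) := by
  have := (integrableOn_image_iff_integrableOn_abs_deriv_smul measurableSet_Ioi
    (aux_inv_deriv a) (aux_inv_inj a ha)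
    (fun t : ℝ => Real.exp (-(t - a/t)^2/2))).1 (by rwa [aux_inv_image a ha])
  refine this.congr_fun (fun t ht => ?_) measurableSet_Ioi
  have ht0 : (0:ℝ) < t := ht
  have h1 : |(-(a / t^2))| = a / t^2 := by rw [abs_neg, abs_of_pos (by positivity)]
  beta_reduce
  rw [smul_eq_mul, h1]
  congr 2
  have : a / (a / t) = t := by field_simp
  rw [this]
  ring

lemma aux_g_image (a : ℝ) (ha : 0 < a) :
    (fun t : ℝ => t - a / t) '' (Ioi 0) = univ := by
  refine eq_univ_of_forall (fun u => ?_)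
  set s := Real.sqrt (u^2 + 4*a) with hs
  have hs2 : s^2 = u^2 + 4*a := Real.sq_sqrt (by positivity)
  have hsu : |u| < s := by
    have : Real.sqrt (u^2) < s := by
      apply Real.sqrt_lt_sqrt (sq_nonneg u); linarith
    rwa [Real.sqrt_sq_eq_abs] at this
  have ht0 : 0 < (u + s) / 2 := by
    have := abs_lt.1 hsu
    linarith [this.1]
  refine ⟨(u + s)/2, ht0, ?_⟩
  have hne : u + s ≠ 0 := by linarith
  show (u + s)/2 - a / ((u + s)/2) = u
  field_simp
  nlinarith [hs2]

lemma aux_g_inj (a : ℝ) (ha : 0 < a) : InjOn (fun t : ℝ => t - a / t) (Ioi 0) := by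
  have : StrictMonoOn (fun t : ℝ => t - a / t) (Ioi 0) := by
    intro s hs t ht hst
    have hs0 : (0:ℝ) < s := hs
    have ht0 : (0:ℝ) < t := ht
    simp only
    have : a / t ≤ a / s := div_le_div_of_nonneg_left (le_of_lt ha) hs0 (le_of_lt hst)
    linarith
  exact this.injOn

lemma aux_g_deriv (a : ℝ) : ∀ t ∈ Ioi (0:ℝ),
    HasDerivWithinAt (fun t : ℝ => t - a / t) (1 + a / t^2) (Ioi 0) t := by
  intro t ht
  have h : HasDerivAt (fun t : ℝ => t - a / t) (1 - (0 * t - a * 1) / t^2) t :=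
    (hasDerivAt_id t).sub (((hasDerivAt_const t a).div (hasDerivAt_id t) (ne_of_gt ht)))
  rw [show 1 + a / t^2 = 1 - (0 * t - a * 1) / t^2 by ring]
  exact h.hasDerivWithinAt

lemma aux_schlomilch (a : ℝ) (ha : 0 ≤ a) :
    ∫ t in Ioi (0:ℝ), Real.exp (-(t - a/t)^2/2) = Real.sqrt (2*π) / 2 := by
  rcases eq_or_lt_of_le ha with rfl | ha'
  · simp only [zero_div, sub_zero]
    have : ∀ t : ℝ, Real.exp (-t^2/2) = Real.exp (-(1/2 : ℝ) * t^2) := by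
      intro t; congr 1; ring
    simp_rw [this]
    rw [integral_gaussian_Ioi]
    rw [show π / (1/2 : ℝ) = 2 * π by ring]
  · have key : ∫ u : ℝ, Real.exp (-(1/2 : ℝ) * u^2)
        = ∫ t in Ioi (0:ℝ), (1 + a/t^2) * Real.exp (-(t - a/t)^2/2) := by
      rw [← setIntegral_univ, ← aux_g_image a ha',
        integral_image_eq_integral_abs_deriv_smul measurableSet_Ioi (aux_g_deriv a)
          (aux_g_inj a ha')]
      refine setIntegral_congr_fun measurableSet_Ioi (fun t ht => ?_)
      have ht0 : (0:ℝ) < t := ht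
      rw [smul_eq_mul, abs_of_pos (by positivity)]
      congr 1
      ring
    have hf := aux_integrable_f a ha
    have hg : IntegrableOn (fun t : ℝ => (a / t^2) * Real.exp (-(t - a/t)^2/2)) (Ioi 0) :=
      aux_inv_integrable a ha' hf
    have hsplit : ∫ t in Ioi (0:ℝ), (1 + a/t^2) * Real.exp (-(t - a/t)^2/2)
        = (∫ t in Ioi (0:ℝ), Real.exp (-(t - a/t)^2/2))
          + ∫ t in Ioi (0:ℝ), (a/t^2) * Real.exp (-(t - a/t)^2/2) := by
      rw [← integral_add hf hg]
      refine setIntegral_congr_fun measurableSet_Ioi (fun t ht => ?_)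
      ring
    have hgauss : ∫ u : ℝ, Real.exp (-(1/2 : ℝ) * u^2) = Real.sqrt (2*π) := by
      rw [integral_gaussian, show π / (1/2 : ℝ) = 2 * π by ring]
    have h2 := aux_inv_subst a ha'
    have : Real.sqrt (2*π) = 2 * ∫ t in Ioi (0:ℝ), Real.exp (-(t - a/t)^2/2) := by
      rw [← hgauss, key, hsplit, ← h2]; ring
    linarith

lemma aux_sq_image : (fun t : ℝ => t^2) '' (Ioi 0) = Ioi 0 := by
  ext u
  constructor
  · rintro ⟨t, ht, rfl⟩
    exact pow_pos (show (0:ℝ) < t from ht) 2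
  · intro hu
    exact ⟨Real.sqrt u, Real.sqrt_pos.2 hu, Real.sq_sqrt (le_of_lt hu)⟩

lemma aux_gig (b : ℝ) :
    ∫ l in Ioi (0:ℝ), l ^ (-(1:ℝ)/2) * Real.exp (-(l + b^2/l)/2)
      = Real.sqrt (2*π) * Real.exp (-|b|) := by
  have hderiv : ∀ t ∈ Ioi (0:ℝ),
      HasDerivWithinAt (fun t : ℝ => t^2) (2*t) (Ioi 0) t := by
    intro t ht
    simpa using ((hasDerivAt_pow 2 t).hasDerivWithinAt)
  have hinj : InjOn (fun t : ℝ => t^2) (Ioi 0) := by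
    intro s hs t ht h
    have hs0 : (0:ℝ) < s := hs
    have ht0 : (0:ℝ) < t := ht
    simp only at h
    have h3 : (s - t) * (s + t) = 0 := by nlinarith
    have h4 : s + t ≠ 0 := by positivity
    have h5 := (mul_eq_zero.1 h3).resolve_right h4
    linarith
  rw [← aux_sq_image, integral_image_eq_integral_abs_deriv_smul measurableSet_Ioi hderiv hinj]
  have habs : 0 ≤ |b| := abs_nonneg b
  have hstep : ∀ t ∈ Ioi (0:ℝ),
      |2*t| • ((t^2) ^ (-(1:ℝ)/2) * Real.exp (-(t^2 + b^2/t^2)/2))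
      = (2 * Real.exp (-|b|)) * Real.exp (-(t - |b|/t)^2/2) := by
    intro t ht
    have ht0 : (0:ℝ) < t := ht
    have h1 : ((t:ℝ)^2) ^ (-(1:ℝ)/2) = t⁻¹ := by
      rw [← Real.rpow_natCast t 2, ← Real.rpow_mul (le_of_lt ht0)]
      norm_num [Real.rpow_neg_one]
    have h2 : -(t^2 + b^2/t^2)/2 = -|b| + (-(t - |b|/t)^2/2) := by
      have hb2 : |b|^2 = b^2 := sq_abs b
      field_simp
      nlinarith [hb2]
    rw [smul_eq_mul, abs_of_pos (by positivity), h1, h2, Real.exp_add]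
    field_simp
  rw [setIntegral_congr_fun measurableSet_Ioi hstep, integral_const_mul,
    aux_schlomilch |b| habs]
  ring
/-- Hinge-loss case of Lemma 1: the pseudo-likelihood `φ₂(y|ω) = exp(-2c(ℓ - yω)₊)`
equals `(2π)^{-1/2} e^{-cℓ}` times the integral over `λ ∈ (0,∞)` of the generalized
inverse Gaussian kernel `λ^{-1/2} exp(-(λ + c²ℓ²/λ)/2)` times `exp(κ(λ)ω - ρ(λ)ω²/2)`,
where `κ(λ) = cy(1 + cℓ/λ)` and `ρ(λ) = c²/λ`. -/
theorem hinge_pseudolikelihood_mixture (y c ℓ ω : ℝ) (hy : y = 1 ∨ y = -1) (hc : 0 < c) :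
    Real.exp (-2 * c * max 0 (ℓ - y * ω)) =
      (2 * Real.pi) ^ (-(1 : ℝ) / 2) * Real.exp (-(c * ℓ)) *
        ∫ l in Set.Ioi (0 : ℝ),
          l ^ (-(1 : ℝ) / 2) * Real.exp (-(l + c ^ 2 * ℓ ^ 2 / l) / 2) *
            Real.exp (c * y * (1 + c * ℓ / l) * ω - c ^ 2 / l * ω ^ 2 / 2) := by
  have hy2 : y^2 = 1 := by rcases hy with rfl | rfl <;> norm_num
  set B := c * (ℓ - y * ω) with hB
  have hcong : ∀ l ∈ Ioi (0:ℝ),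
      l ^ (-(1:ℝ)/2) * Real.exp (-(l + c^2*ℓ^2/l)/2) *
        Real.exp (c*y*(1 + c*ℓ/l)*ω - c^2/l*ω^2/2)
      = Real.exp (c*y*ω) * (l ^ (-(1:ℝ)/2) * Real.exp (-(l + B^2/l)/2)) := by
    intro l hl
    have hl0 : (0:ℝ) < l := hl
    rw [mul_assoc, ← Real.exp_add,
      show Real.exp (c*y*ω) * (l ^ (-(1:ℝ)/2) * Real.exp (-(l + B^2/l)/2))
        = l ^ (-(1:ℝ)/2) * (Real.exp (c*y*ω) * Real.exp (-(l + B^2/l)/2)) by ring,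
      ← Real.exp_add]
    congr 1
    congr 1
    rw [hB]
    field_simp
    linear_combination (c^2*ω^2) * hy2
  rw [setIntegral_congr_fun measurableSet_Ioi hcong, integral_const_mul, aux_gig B]
  have hmax : -B - |B| = -2 * c * max 0 (ℓ - y*ω) := by
    rcases le_total 0 (ℓ - y*ω) with h | h
    · rw [abs_of_nonneg (mul_nonneg hc.le h), max_eq_right h, hB]; ring
    · rw [abs_of_nonpos (mul_nonpos_of_nonneg_of_nonpos hc.le h), max_eq_left h, hB]; ring
  have hpow : (2*π) ^ (-(1:ℝ)/2) * (2*π) ^ ((1:ℝ)/2) = 1 := by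
    rw [← Real.rpow_add (by positivity)]; norm_num
  rw [show (2*Real.pi) ^ (-(1:ℝ)/2) * Real.exp (-(c*ℓ)) *
      (Real.exp (c*y*ω) * (Real.sqrt (2*π) * Real.exp (-|B|)))
      = ((2*π) ^ (-(1:ℝ)/2) * Real.sqrt (2*π)) *
        (Real.exp (-(c*ℓ)) * Real.exp (c*y*ω) * Real.exp (-|B|)) by ring,
    Real.sqrt_eq_rpow, hpow, one_mul, ← Real.exp_add, ← Real.exp_add]
  congr 1
  have hB' : -B = -(c*ℓ) + c*y*ω := by rw [hB]; ring
  linarith [hmax]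
end

section
/- Let b > 0, let (g_d)_{d≥1} be an i.i.d. sequence of random variables each with the Gamma distribution with shape b and rate 1, and let X = (1/(2π²)) Σ_{d=1}^{∞} g_d/((d − 1/2)²). Then for every real number t ≥ 0: E[exp(−tX)] = cosh(√(t/2))^{−b}. -/
set_option maxHeartbeats 1000000


open MeasureTheory Real ProbabilityTheory

open Set Filter Topology
open scoped ENNReal NNReal

section


/-- Product formula for cosh. -/
lemma cosh_prod_aux (x : ℝ) :
    Tendsto (fun n : ℕ => ∏ j ∈ Finset.range n, (1 + x ^ 2 / ((j : ℝ) + 1 / 2) ^ 2)) atTop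
      (𝓝 (Real.cosh (Real.pi * x))) := by
  rcases eq_or_ne x 0 with rfl | hx
  · simp only [ne_eq, OfNat.ofNat_ne_zero, not_false_eq_true, zero_pow, zero_div, add_zero,
      Finset.prod_const_one, mul_zero, Real.cosh_zero]
    exact tendsto_const_nhds
  set z : ℂ := x * Complex.I with hz
  have hz2 : z ^ 2 = -(x:ℂ) ^ 2 := by
    simp [hz, mul_pow, Complex.I_sq]
  have hsin_ne : Complex.sin (Real.pi * z) ≠ 0 := by
    have : (Real.pi * z) = ((Real.pi * x : ℝ) : ℂ) * Complex.I := by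
      push_cast [hz]; ring
    rw [this, Complex.sin_mul_I]
    refine mul_ne_zero ?_ Complex.I_ne_zero
    rw [← Complex.ofReal_sinh, Ne, Complex.ofReal_eq_zero]
    exact Real.sinh_ne_zero.mpr (mul_ne_zero Real.pi_ne_zero hx)
  have hfac_ne : ∀ k : ℕ, (1 : ℂ) - z ^ 2 / ((k : ℂ) + 1) ^ 2 ≠ 0 := by
    intro k
    rw [hz2]
    have : (1 : ℂ) - -(x:ℂ) ^ 2 / ((k : ℂ) + 1) ^ 2 = ((1 + x ^ 2 / ((k : ℝ) + 1) ^ 2 : ℝ) : ℂ) := by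
      push_cast; ring
    rw [this, Ne, Complex.ofReal_eq_zero]
    positivity
  have S1 := Complex.tendsto_euler_sin_prod z
  have S2 := Complex.tendsto_euler_sin_prod (2 * z)
  have S2' : Tendsto (fun n : ℕ =>
      (Real.pi : ℂ) * (2 * z) * ∏ j ∈ Finset.range (2 * n), (1 - (2 * z) ^ 2 / ((j : ℂ) + 1) ^ 2))
      atTop (𝓝 (Complex.sin (Real.pi * (2 * z)))) :=
    S2.comp (tendsto_id.const_mul_atTop' zero_lt_two)
  have hden : Tendsto (fun n : ℕ =>
      2 * ((Real.pi : ℂ) * z * ∏ j ∈ Finset.range n, (1 - z ^ 2 / ((j : ℂ) + 1) ^ 2)))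
      atTop (𝓝 (2 * Complex.sin (Real.pi * z))) := S1.const_mul 2
  have hquot := S2'.div hden (mul_ne_zero two_ne_zero hsin_ne)
  have hlim : Complex.sin (Real.pi * (2 * z)) / (2 * Complex.sin (Real.pi * z))
      = Complex.cos (Real.pi * z) := by
    have h2 : (Real.pi : ℂ) * (2 * z) = 2 * (Real.pi * z) := by ring
    rw [h2, Complex.sin_two_mul]
    field_simp
  rw [hlim] at hquot
  have key : ∀ n : ℕ,
      ((Real.pi : ℂ) * (2 * z) * ∏ j ∈ Finset.range (2 * n), (1 - (2 * z) ^ 2 / ((j : ℂ) + 1) ^ 2)) /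
        (2 * ((Real.pi : ℂ) * z * ∏ j ∈ Finset.range n, (1 - z ^ 2 / ((j : ℂ) + 1) ^ 2)))
      = ∏ k ∈ Finset.range n, (1 - (2 * z) ^ 2 / (2 * (k : ℂ) + 1) ^ 2) := by
    intro n
    have hsplit : ∏ j ∈ Finset.range (2 * n), (1 - (2 * z) ^ 2 / ((j : ℂ) + 1) ^ 2)
        = (∏ k ∈ Finset.range n, (1 - (2 * z) ^ 2 / (2 * (k : ℂ) + 1) ^ 2)) *
          ∏ k ∈ Finset.range n, (1 - z ^ 2 / ((k : ℂ) + 1) ^ 2) := by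
      induction n with
      | zero => simp
      | succ m ih =>
        have h2 : 2 * (m + 1) = (2 * m) + 1 + 1 := by omega
        rw [h2, Finset.prod_range_succ, Finset.prod_range_succ, ih,
          Finset.prod_range_succ, Finset.prod_range_succ]
        have he : (1 : ℂ) - (2 * z) ^ 2 / (((2 * m + 1 : ℕ) : ℂ) + 1) ^ 2
            = 1 - z ^ 2 / ((m : ℂ) + 1) ^ 2 := by
          have h3 : ((2 * m + 1 : ℕ) : ℂ) + 1 = 2 * ((m : ℂ) + 1) := by push_cast; ring
          have hne : ((m : ℂ) + 1) ≠ 0 := Nat.cast_add_one_ne_zero m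
          rw [h3]
          field_simp
        have ho : ((2 * m : ℕ) : ℂ) + 1 = (2 * (m : ℂ) + 1) := by push_cast; ring
        rw [ho, he]
        ring
    rw [hsplit]
    have hprod_ne : (∏ j ∈ Finset.range n, ((1:ℂ) - z ^ 2 / ((j : ℂ) + 1) ^ 2)) ≠ 0 :=
      Finset.prod_ne_zero_iff.mpr fun k _ => hfac_ne k
    have hpi : (Real.pi : ℂ) ≠ 0 := by exact_mod_cast Real.pi_ne_zero
    have hzne : z ≠ 0 := by
      simp only [hz, mul_ne_zero_iff, Complex.I_ne_zero, and_true, Ne, Complex.ofReal_eq_zero]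
      exact ⟨hx, not_false⟩
    rw [div_eq_iff (mul_ne_zero two_ne_zero (mul_ne_zero (mul_ne_zero hpi hzne) hprod_ne))]
    ring
  have hquot' : Tendsto (fun n : ℕ =>
      ∏ k ∈ Finset.range n, ((1 : ℂ) - (2 * z) ^ 2 / (2 * (k : ℂ) + 1) ^ 2)) atTop
      (𝓝 (Complex.cos (Real.pi * z))) := hquot.congr key
  have hre : ∀ n : ℕ, (∏ k ∈ Finset.range n, ((1 : ℂ) - (2 * z) ^ 2 / (2 * (k : ℂ) + 1) ^ 2))
      = ((∏ j ∈ Finset.range n, (1 + x ^ 2 / ((j : ℝ) + 1 / 2) ^ 2) : ℝ) : ℂ) := by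
    intro n
    push_cast
    refine Finset.prod_congr rfl fun k _ => ?_
    have h1 : ((2 : ℂ) * z) ^ 2 = -(4 : ℂ) * (x : ℂ) ^ 2 := by rw [mul_pow, hz2]; ring
    have h3 : ((k : ℂ) + 1 / 2) = (2 * (k : ℂ) + 1) / 2 := by ring
    rw [h1, h3, div_pow, div_div_eq_mul_div]
    ring
  have hcos : Complex.cos (Real.pi * z) = ((Real.cosh (Real.pi * x) : ℝ) : ℂ) := by
    have : (Real.pi : ℂ) * z = ((Real.pi * x : ℝ) : ℂ) * Complex.I := by push_cast [hz]; ring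
    rw [this, Complex.cos_mul_I, Complex.ofReal_cosh]
  rw [hcos] at hquot'
  have h2 := (Complex.continuous_re.tendsto _).comp hquot'
  rw [Complex.ofReal_re] at h2
  refine h2.congr fun n => ?_
  simp only [Function.comp_apply, hre n, Complex.ofReal_re]


lemma gammaPDF_measurable (a r : ℝ) : Measurable (gammaPDF a r) :=
  (measurable_gammaPDFReal a r).ennreal_ofReal

/-- Laplace transform of Gamma(b,1). -/
lemma gamma_exp_integral (b : ℝ) (hb : 0 < b) (c : ℝ) (hc : 0 ≤ c) :
    ∫ x, Real.exp (-(c * x)) ∂(gammaMeasure b 1) = (1 + c) ^ (-b) := by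
  have h1c : (0:ℝ) < 1 + c := by linarith
  have hmeas : Measurable fun x : ℝ => Real.exp (-(c * x)) :=
    (measurable_id.const_mul c).neg.exp
  rw [integral_eq_lintegral_of_nonneg_ae (ae_of_all _ fun x => (Real.exp_pos _).le)
    hmeas.aestronglyMeasurable]
  rw [gammaMeasure, lintegral_withDensity_eq_lintegral_mul _ (gammaPDF_measurable b 1)
    hmeas.ennreal_ofReal]
  have hpt : ∀ x : ℝ, gammaPDF b 1 x * ENNReal.ofReal (Real.exp (-(c * x)))
      = ENNReal.ofReal ((1 + c) ^ (-b)) * gammaPDF b (1 + c) x := by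
    intro x
    rcases lt_or_ge x 0 with hx | hx
    · rw [gammaPDF_of_neg hx, gammaPDF_of_neg hx, zero_mul, mul_zero]
    · rw [gammaPDF_of_nonneg hx, gammaPDF_of_nonneg hx,
        ← ENNReal.ofReal_mul (by positivity), ← ENNReal.ofReal_mul (by positivity)]
      congr 1
      have hexp : Real.exp (-(1 * x)) * Real.exp (-(c * x)) = Real.exp (-((1 + c) * x)) := by
        rw [← Real.exp_add]; ring_nf
      have hrpow : (1 + c) ^ (-b) * (1 + c) ^ b = 1 := by
        rw [← Real.rpow_add h1c]; simp
      calc (1:ℝ) ^ b / Real.Gamma b * x ^ (b - 1) * Real.exp (-(1 * x)) * Real.exp (-(c * x))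
          = 1 / Real.Gamma b * x ^ (b - 1) * Real.exp (-((1 + c) * x)) := by
            rw [Real.one_rpow, mul_assoc, hexp]
        _ = ((1 + c) ^ (-b) * (1 + c) ^ b) / Real.Gamma b * x ^ (b - 1) *
              Real.exp (-((1 + c) * x)) := by rw [hrpow]
        _ = (1 + c) ^ (-b) * ((1 + c) ^ b / Real.Gamma b * x ^ (b - 1) *
              Real.exp (-((1 + c) * x))) := by ring
  simp only [Pi.mul_apply]
  rw [lintegral_congr hpt, lintegral_const_mul _ (gammaPDF_measurable b (1 + c)),
    lintegral_gammaPDF_eq_one hb h1c, mul_one,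
    ENNReal.toReal_ofReal (Real.rpow_nonneg h1c.le _)]

/-- Gamma measure gives no mass to negatives. -/
lemma gammaMeasure_Iio_zero (b : ℝ) : gammaMeasure b 1 (Iio 0) = 0 := by
  rw [gammaMeasure, withDensity_apply _ measurableSet_Iio]
  exact lintegral_gammaPDF_of_nonpos le_rfl

/-- The first moment lintegral of Gamma(b,1) is finite. -/
lemma gammaMeasure_fst_moment_lt_top (b : ℝ) (hb : 0 < b) :
    ∫⁻ x, ENNReal.ofReal x ∂(gammaMeasure b 1) < ⊤ := by
  rw [gammaMeasure, lintegral_withDensity_eq_lintegral_mul _ (gammaPDF_measurable b 1)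
    ENNReal.measurable_ofReal]
  have hpt : ∀ x : ℝ, (gammaPDF b 1 * fun x => ENNReal.ofReal x) x
      = ENNReal.ofReal (gammaPDFReal b 1 x * x) := by
    intro x
    rcases lt_or_ge x 0 with hx | hx
    · have h0 : gammaPDFReal b 1 x = 0 := by simp [gammaPDFReal, not_le.mpr hx]
      simp [Pi.mul_apply, gammaPDF_of_neg hx, h0]
    · simp only [Pi.mul_apply, gammaPDF]
      rw [← ENNReal.ofReal_mul (gammaPDFReal_nonneg hb one_pos x)]
  rw [lintegral_congr hpt]
  have hint : Integrable (fun x => gammaPDFReal b 1 x * x) := by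
    have heq : (fun x : ℝ => gammaPDFReal b 1 x * x)
        = Set.indicator (Ioi 0) (fun x => 1 / Real.Gamma b * (Real.exp (-x) * x ^ ((b + 1) - 1))) := by
      ext x
      rcases le_or_gt x 0 with hx | hx
      · rw [Set.indicator_of_notMem (by simpa using hx)]
        rcases lt_or_eq_of_le hx with hx' | hx'
        · simp [gammaPDFReal, not_le.mpr hx']
        · simp [hx']
      · rw [Set.indicator_of_mem (by simpa using hx)]
        simp only [gammaPDFReal, if_pos hx.le]
        rw [Real.one_rpow, Real.rpow_sub hx, Real.rpow_sub hx, Real.rpow_one,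
          Real.rpow_add hx, Real.rpow_one]
        have hΓ : Real.Gamma b ≠ 0 := (Real.Gamma_pos_of_pos hb).ne'
        field_simp
    rw [heq, integrable_indicator_iff measurableSet_Ioi]
    exact ((Real.GammaIntegral_convergent (by linarith : (0:ℝ) < b + 1)).const_mul _)
  calc ∫⁻ x, ENNReal.ofReal (gammaPDFReal b 1 x * x) ∂volume
      ≤ ∫⁻ x, ‖gammaPDFReal b 1 x * x‖ₑ ∂volume := by
        exact lintegral_mono fun x => Real.ofReal_le_enorm _
    _ < ⊤ := hint.2

end

open MeasureTheory Real ProbabilityTheory Filter Topology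
open scoped ENNReal NNReal


/-- Laplace transform of the Polya-Gamma PG(b, 0) random variable
`X = (1/(2π²)) Σ_{d≥1} g_d/(d - 1/2)²` (indexed here by `d : ℕ`, so the term for `d`
is `g d/(d + 1/2)²`), where `(g_d)` are i.i.d. Gamma(b, 1): for every `t ≥ 0`,
`E[exp(-tX)] = cosh(√(t/2))^{-b}`. -/
theorem polya_gamma_laplace_transform {Ω : Type*} [MeasurableSpace Ω]
    (P : Measure Ω) [IsProbabilityMeasure P]
    (b : ℝ) (hb : 0 < b) (g : ℕ → Ω → ℝ)
    (hmeas : ∀ d, Measurable (g d))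
    (hindep : iIndepFun g P)
    (hdist : ∀ d, P.map (g d) = gammaMeasure b 1)
    (X : Ω → ℝ)
    (hX : ∀ ω, X ω = 1 / (2 * Real.pi ^ 2) * ∑' d : ℕ, g d ω / ((d : ℝ) + 1 / 2) ^ 2)
    (t : ℝ) (ht : 0 ≤ t) :
    ∫ ω, Real.exp (-t * X ω) ∂P = Real.cosh (Real.sqrt (t / 2)) ^ (-b) := by
  classical
  set K : ℝ := t / (2 * Real.pi ^ 2) with hK
  have hK0 : 0 ≤ K := by positivity
  set c : ℕ → ℝ := fun d => K / ((d : ℝ) + 1 / 2) ^ 2 with hc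
  have hc0 : ∀ d, 0 ≤ c d := fun d => by positivity
  -- summability of c
  have hcsum : Summable c := by
    have hbase : Summable (fun n : ℕ => 1 / ((n : ℝ)) ^ 2) :=
      Real.summable_one_div_nat_pow.mpr one_lt_two
    have h2 : Summable (fun d : ℕ => 1 / ((d : ℝ) + 1) ^ 2) := by
      refine ((summable_nat_add_iff 1).mpr hbase).congr fun n => by push_cast; ring
    have h1 : Summable (fun d : ℕ => K * (4 / ((d : ℝ) + 1) ^ 2)) :=
      ((h2.mul_left 4).congr (fun n => by ring)).mul_left K
    refine Summable.of_nonneg_of_le hc0 (fun d => ?_) h1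
    have hd1 : (0:ℝ) < ((d : ℝ) + 1 / 2) ^ 2 := by positivity
    have hd2 : (0:ℝ) < ((d : ℝ) + 1) ^ 2 := by positivity
    have key : 1 / ((d : ℝ) + 1 / 2) ^ 2 ≤ 4 / ((d : ℝ) + 1) ^ 2 := by
      rw [div_le_div_iff₀ hd1 hd2]
      nlinarith [Nat.cast_nonneg (α := ℝ) d]
    calc c d = K * (1 / ((d : ℝ) + 1 / 2) ^ 2) := by rw [hc]; ring
      _ ≤ K * (4 / ((d : ℝ) + 1) ^ 2) := mul_le_mul_of_nonneg_left key hK0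
  -- a.s. nonnegativity
  have hnonneg : ∀ᵐ ω ∂P, ∀ d, 0 ≤ g d ω := by
    rw [ae_all_iff]
    intro d
    have : P {ω | g d ω < 0} = 0 := by
      have : {ω | g d ω < 0} = g d ⁻¹' (Set.Iio 0) := rfl
      rw [this, ← Measure.map_apply (hmeas d) measurableSet_Iio, hdist d,
        gammaMeasure_Iio_zero]
    filter_upwards [measure_eq_zero_iff_ae_notMem.mp this] with ω hω
    simpa using not_lt.mp hω
  -- finiteness of the expected series
  have hM : ∫⁻ x, ENNReal.ofReal x ∂(gammaMeasure b 1) < ⊤ := gammaMeasure_fst_moment_lt_top b hb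
  set M : ℝ≥0∞ := ∫⁻ x, ENNReal.ofReal x ∂(gammaMeasure b 1) with hMdef
  have hgl : ∀ d, ∫⁻ ω, ENNReal.ofReal (g d ω) ∂P = M := by
    intro d
    rw [hMdef, ← hdist d, lintegral_map ENNReal.measurable_ofReal (hmeas d)]
  have hsumfin : ∀ᵐ ω ∂P, (∑' d, ENNReal.ofReal (c d * g d ω)) < ⊤ := by
    refine ae_lt_top' (AEMeasurable.ennreal_tsum fun d => ?_) ?_
    · exact ((hmeas d).const_mul (c d)).ennreal_ofReal.aemeasurable
    · rw [lintegral_tsum fun d => ((hmeas d).const_mul (c d)).ennreal_ofReal.aemeasurable]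
      have : ∀ d, ∫⁻ ω, ENNReal.ofReal (c d * g d ω) ∂P = ENNReal.ofReal (c d) * M := by
        intro d
        simp_rw [ENNReal.ofReal_mul (hc0 d)]
        rw [lintegral_const_mul _ (hmeas d).ennreal_ofReal, hgl d]
      simp_rw [this]
      rw [ENNReal.tsum_mul_right]
      exact ENNReal.mul_ne_top (ENNReal.ofReal_tsum_of_nonneg hc0 hcsum ▸ ENNReal.ofReal_ne_top)
        hM.ne
  -- a.s. summability
  have hsummable : ∀ᵐ ω ∂P, Summable (fun d => c d * g d ω) := by
    filter_upwards [hsumfin, hnonneg] with ω hfin hpos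
    have := ENNReal.summable_toReal hfin.ne
    refine this.congr fun d => ?_
    rw [ENNReal.toReal_ofReal (mul_nonneg (hc0 d) (hpos d))]
  -- partial product integrals
  have hstep : ∀ n : ℕ, ∫ ω, Real.exp (-∑ d ∈ Finset.range n, c d * g d ω) ∂P
      = ∏ d ∈ Finset.range n, (1 + c d) ^ (-b) := by
    intro n
    have hind2 : iIndepFun (fun d ω => c d * g d ω) P :=
      hindep.comp (fun d x => c d * x) (fun d => measurable_const_mul _)
    have hm2 : ∀ d, Measurable (fun ω => c d * g d ω) := fun d => (hmeas d).const_mul _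
    have := hind2.mgf_sum hm2 (t := -1) (Finset.range n)
    rw [mgf] at this
    simp_rw [Finset.sum_apply, neg_one_mul, ← Finset.sum_neg_distrib] at this
    rw [show (fun ω => Real.exp (-∑ d ∈ Finset.range n, c d * g d ω))
      = fun ω => Real.exp (∑ d ∈ Finset.range n, -(c d * g d ω)) from by
        funext ω; rw [← Finset.sum_neg_distrib]]
    rw [this]
    refine Finset.prod_congr rfl fun d _ => ?_
    rw [mgf]
    have hmap : ∫ x, Real.exp (-(c d * x)) ∂(P.map (g d))
        = ∫ ω, Real.exp (-(c d * g d ω)) ∂P :=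
      integral_map (φ := g d) (f := fun x => Real.exp (-(c d * x))) (hmeas d).aemeasurable
        (((measurable_const_mul (c d)).neg.exp).aestronglyMeasurable)
    simp_rw [neg_one_mul]
    rw [← hmap, hdist d, gamma_exp_integral b hb (c d) (hc0 d)]
  -- dominated convergence
  have hdct : Tendsto (fun n => ∫ ω, Real.exp (-∑ d ∈ Finset.range n, c d * g d ω) ∂P)
      atTop (𝓝 (∫ ω, Real.exp (-t * X ω) ∂P)) := by
    refine tendsto_integral_of_dominated_convergence (fun _ => 1)
      (fun n => ?_) (integrable_const 1) (fun n => ?_) ?_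
    · exact (Real.measurable_exp.comp
        (Finset.measurable_sum _ fun d _ => (hmeas d).const_mul _).neg).aestronglyMeasurable
    · filter_upwards [hnonneg] with ω hpos
      rw [Real.norm_eq_abs, abs_of_pos (Real.exp_pos _)]
      refine Real.exp_le_one_iff.mpr (neg_nonpos.mpr ?_)
      exact Finset.sum_nonneg fun d _ => mul_nonneg (hc0 d) (hpos d)
    · filter_upwards [hsummable] with ω hsum
      have hts : ∑' d, c d * g d ω = t * X ω := by
        rw [hX ω]
        have : ∀ d, c d * g d ω = K * (g d ω / ((d : ℝ) + 1 / 2) ^ 2) := by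
          intro d; rw [hc]; ring
        simp_rw [this]
        rw [tsum_mul_left, hK]
        ring
      have hneg : -t * X ω = -∑' d, c d * g d ω := by rw [hts]; ring
      rw [hneg]
      exact (Real.continuous_exp.tendsto _).comp
        (by simpa using hsum.hasSum.tendsto_sum_nat.neg)
  simp_rw [hstep] at hdct
  -- product limit
  set x : ℝ := Real.sqrt (t / 2) / Real.pi with hxdef
  have hx2 : x ^ 2 = K := by
    rw [hxdef, div_pow, Real.sq_sqrt (by linarith), hK]
    ring
  have hprod : Tendsto (fun n => ∏ d ∈ Finset.range n, (1 + c d)) atTop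
      (𝓝 (Real.cosh (Real.sqrt (t / 2)))) := by
    have := cosh_prod_aux x
    rw [show Real.pi * x = Real.sqrt (t / 2) from by
      rw [hxdef]; field_simp] at this
    refine this.congr fun n => Finset.prod_congr rfl fun d _ => ?_
    rw [hx2, hc]
  have hlim2 : Tendsto (fun n => ∏ d ∈ Finset.range n, (1 + c d) ^ (-b)) atTop
      (𝓝 (Real.cosh (Real.sqrt (t / 2)) ^ (-b))) := by
    have hrw : ∀ n, ∏ d ∈ Finset.range n, (1 + c d) ^ (-b)
        = (∏ d ∈ Finset.range n, (1 + c d)) ^ (-b) := fun n =>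
      Real.finset_prod_rpow _ _ (fun d _ => by have := hc0 d; linarith) _
    simp_rw [hrw]
    exact hprod.rpow_const (Or.inl (by positivity))
  exact tendsto_nhds_unique hdct hlim2
end

section
/- Let c > 0, let (g_d)_{d≥1} be an i.i.d. sequence of random variables each with the Gamma distribution with shape c and rate 1, and let X = (1/(2π²)) Σ_{d=1}^{∞} g_d/((d − 1/2)²). Then for every ỹ ∈ {0, 1} and every real number ω: e^{cỹω}/(1 + e^{ω})^{c} = 2^{−c} · e^{κω} · E[exp(−X ω²/2)], where κ = c(ỹ − 1/2). -/
open MeasureTheory Real ProbabilityTheory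

open Filter Topology
lemma tendsto_euler_sinh_prod (y : ℝ) :
    Tendsto (fun n : ℕ => π * y * ∏ j ∈ Finset.range n, ((1 : ℝ) + y ^ 2 / ((j : ℝ) + 1) ^ 2))
      atTop (𝓝 (Real.sinh (π * y))) := by
  have h := Complex.tendsto_euler_sin_prod (y * Complex.I)
  have h2 : Tendsto (fun n : ℕ =>
      (Real.pi * (y * Complex.I) * ∏ j ∈ Finset.range n,
        ((1 : ℂ) - (y * Complex.I) ^ 2 / ((j : ℂ) + 1) ^ 2)).im) atTop
      (𝓝 (Complex.sin (Real.pi * (y * Complex.I))).im) :=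
    (Complex.continuous_im.tendsto _).comp h
  convert h2 using 2 with n
  · have : ∀ j ∈ Finset.range n, ((1 : ℂ) - (y * Complex.I) ^ 2 / ((j : ℂ) + 1) ^ 2)
        = ((1 + y ^ 2 / ((j:ℝ) + 1) ^ 2 : ℝ) : ℂ) := by
      intro j _
      push_cast
      rw [mul_pow, Complex.I_sq]
      ring
    rw [Finset.prod_congr rfl this, ← Complex.ofReal_prod]
    have : (Real.pi : ℂ) * (y * Complex.I) *
        ((∏ j ∈ Finset.range n, (1 + y ^ 2 / ((j:ℝ) + 1) ^ 2) : ℝ) : ℂ)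
        = ((Real.pi * y * ∏ j ∈ Finset.range n, (1 + y ^ 2 / ((j:ℝ) + 1) ^ 2) : ℝ) : ℂ)
          * Complex.I := by push_cast; ring
    rw [this, Complex.mul_I_im, Complex.ofReal_re]
  · have : (Real.pi : ℂ) * (y * Complex.I) = ((Real.pi * y : ℝ) : ℂ) * Complex.I := by
      push_cast; ring
    rw [this, Complex.sin_mul_I, Complex.mul_I_im, Complex.sinh_ofReal_re]

lemma prod_range_two_mul (f : ℕ → ℝ) (N : ℕ) :
    ∏ n ∈ Finset.range (2 * N), f n =
      (∏ k ∈ Finset.range N, f (2 * k)) * ∏ k ∈ Finset.range N, f (2 * k + 1) := by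
  induction N with
  | zero => simp
  | succ N ih =>
      have : 2 * (N + 1) = (2 * N) + 1 + 1 := by ring
      rw [this, Finset.prod_range_succ, Finset.prod_range_succ, Finset.prod_range_succ,
        Finset.prod_range_succ, ih]
      ring

lemma tendsto_cosh_prod (y : ℝ) (hy : y ≠ 0) :
    Tendsto (fun n : ℕ => ∏ k ∈ Finset.range n, ((1:ℝ) + 4 * y ^ 2 / (2 * (k:ℝ) + 1) ^ 2))
      atTop (𝓝 (Real.cosh (π * y))) := by
  have hπ : (π : ℝ) ≠ 0 := Real.pi_ne_zero
  have hπy : π * y ≠ 0 := mul_ne_zero hπ hy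
  have hA : ∀ z : ℝ, z ≠ 0 → Tendsto
      (fun n : ℕ => ∏ j ∈ Finset.range n, ((1:ℝ) + z ^ 2 / ((j:ℝ) + 1) ^ 2)) atTop
      (𝓝 (Real.sinh (π * z) / (π * z))) := by
    intro z hz
    have h := (tendsto_euler_sinh_prod z).div_const (π * z)
    refine h.congr fun n => ?_
    rw [mul_comm, mul_div_assoc, div_self (mul_ne_zero hπ hz), mul_one]
  have h2n : Tendsto (fun n : ℕ => 2 * n) atTop atTop :=
    tendsto_atTop_mono (fun n => by simp only [id]; omega) tendsto_id
  have hB : Tendsto (fun n : ℕ =>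
      ∏ j ∈ Finset.range (2 * n), ((1:ℝ) + (2*y) ^ 2 / ((j:ℝ) + 1) ^ 2)) atTop
      (𝓝 (Real.sinh (π * (2*y)) / (π * (2*y)))) :=
    (hA (2*y) (by simpa using hy)).comp h2n
  have hsinh : Real.sinh (π * y) ≠ 0 := by
    rw [Real.sinh_ne_zero]; exact hπy
  have hAy := hA y hy
  have hne : Real.sinh (π * y) / (π * y) ≠ 0 := div_ne_zero hsinh hπy
  have := hB.div hAy hne
  have key : ∀ n : ℕ,
      (∏ j ∈ Finset.range (2 * n), ((1:ℝ) + (2*y) ^ 2 / ((j:ℝ) + 1) ^ 2)) /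
        (∏ j ∈ Finset.range n, ((1:ℝ) + y ^ 2 / ((j:ℝ) + 1) ^ 2)) =
      ∏ k ∈ Finset.range n, ((1:ℝ) + 4 * y ^ 2 / (2 * (k:ℝ) + 1) ^ 2) := by
    intro n
    rw [prod_range_two_mul (fun j => (1:ℝ) + (2*y) ^ 2 / ((j:ℝ) + 1) ^ 2) n]
    have e1 : ∀ k ∈ Finset.range n,
        ((1:ℝ) + (2*y) ^ 2 / ((2 * k : ℕ) + 1) ^ 2) =
          (1:ℝ) + 4 * y ^ 2 / (2 * (k:ℝ) + 1) ^ 2 := by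
      intro k _; push_cast; ring_nf
    have e2 : ∀ k ∈ Finset.range n,
        ((1:ℝ) + (2*y) ^ 2 / ((2 * k + 1 : ℕ) + 1) ^ 2) =
          (1:ℝ) + y ^ 2 / ((k:ℝ) + 1) ^ 2 := by
      intro k _
      have h1 : ((2 * k + 1 : ℕ) : ℝ) + 1 = 2 * ((k:ℝ) + 1) := by push_cast; ring
      rw [h1]
      have h2 : ((k:ℝ) + 1) ≠ 0 := by positivity
      field_simp
    rw [Finset.prod_congr rfl e1, Finset.prod_congr rfl e2]
    have hpos : (∏ j ∈ Finset.range n, ((1:ℝ) + y ^ 2 / ((j:ℝ) + 1) ^ 2)) ≠ 0 := by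
      apply ne_of_gt
      apply Finset.prod_pos
      intro j _; positivity
    field_simp
  have hlim : Real.sinh (π * (2*y)) / (π * (2*y)) / (Real.sinh (π * y) / (π * y))
      = Real.cosh (π * y) := by
    have h2 : π * (2 * y) = 2 * (π * y) := by ring
    rw [h2, Real.sinh_two_mul]
    field_simp
  rw [hlim] at this
  exact this.congr key

lemma gammaPDFReal_mul_exp {c : ℝ} (hc : 0 < c) {s : ℝ} (hs : 0 ≤ s) (x : ℝ) :
    gammaPDFReal c 1 x * Real.exp (-(s * x)) =
      (1 + s) ^ (-c) * gammaPDFReal c (1 + s) x := by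
  have h1s : (0:ℝ) < 1 + s := by linarith
  unfold gammaPDFReal
  split_ifs with hx
  · have hexp : Real.exp (-(1 * x)) * Real.exp (-(s*x)) = Real.exp (-((1+s)*x)) := by
      rw [← Real.exp_add]; ring_nf
    rw [one_rpow, Real.rpow_neg h1s.le, ← hexp]
    field_simp [(Real.rpow_pos_of_pos h1s c).ne', (Real.Gamma_pos_of_pos hc).ne']
  · simp

lemma gamma_laplace {c : ℝ} (hc : 0 < c) {s : ℝ} (hs : 0 ≤ s) :
    ∫ x, Real.exp (-(s * x)) ∂(gammaMeasure c 1) = (1 + s) ^ (-c) := by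
  have h1s : (0:ℝ) < 1 + s := by linarith
  have hmg : Measurable fun x : ℝ => Real.exp (-(s * x)) :=
    (measurable_id.const_mul s).neg.exp
  rw [integral_eq_lintegral_of_nonneg_ae (ae_of_all _ fun x => (Real.exp_pos _).le)
      hmg.aestronglyMeasurable]
  have hpdf : Measurable (gammaPDF c 1) := (measurable_gammaPDFReal c 1).ennreal_ofReal
  rw [gammaMeasure, lintegral_withDensity_eq_lintegral_mul _ hpdf hmg.ennreal_ofReal]
  have heq : ∀ x : ℝ, (gammaPDF c 1 * fun a => ENNReal.ofReal (Real.exp (-(s * a)))) x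
      = ENNReal.ofReal ((1 + s) ^ (-c)) * gammaPDF c (1 + s) x := by
    intro x
    simp only [Pi.mul_apply, gammaPDF]
    rw [← ENNReal.ofReal_mul (gammaPDFReal_nonneg hc one_pos x),
      gammaPDFReal_mul_exp hc hs x,
      ENNReal.ofReal_mul (Real.rpow_nonneg h1s.le _)]
  have hpdf2 : Measurable (gammaPDF c (1+s)) := (measurable_gammaPDFReal c (1+s)).ennreal_ofReal
  rw [lintegral_congr heq, lintegral_const_mul _ hpdf2,
    lintegral_gammaPDF_eq_one hc h1s, mul_one,
    ENNReal.toReal_ofReal (Real.rpow_nonneg h1s.le _)]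

lemma gammaPDFReal_mul_self {c : ℝ} (hc : 0 < c) (x : ℝ) :
    gammaPDFReal c 1 x * x = c * gammaPDFReal (c + 1) 1 x := by
  have hc1 : (0:ℝ) < c + 1 := by linarith
  unfold gammaPDFReal
  split_ifs with hx
  · rw [one_rpow, one_rpow, Real.Gamma_add_one hc.ne']
    rcases eq_or_lt_of_le hx with h0 | hxpos
    · rw [← h0]
      rw [Real.zero_rpow (by linarith : c + 1 - 1 ≠ 0)]
      simp
    · have hpow : x ^ (c - 1) = x ^ c / x := by
        rw [Real.rpow_sub hxpos, Real.rpow_one]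
      rw [hpow]
      field_simp [(Real.Gamma_pos_of_pos hc).ne', hc.ne']
      ring
  · simp

lemma gamma_mean_lintegral {c : ℝ} (hc : 0 < c) :
    ∫⁻ x, ENNReal.ofReal x ∂(gammaMeasure c 1) = ENNReal.ofReal c := by
  have hc1 : (0:ℝ) < c + 1 := by linarith
  have hpdf : Measurable (gammaPDF c 1) := (measurable_gammaPDFReal c 1).ennreal_ofReal
  rw [gammaMeasure, lintegral_withDensity_eq_lintegral_mul _ hpdf ENNReal.measurable_ofReal]
  have heq : ∀ x : ℝ, (gammaPDF c 1 * fun a => ENNReal.ofReal a) x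
      = ENNReal.ofReal c * gammaPDF (c + 1) 1 x := by
    intro x
    simp only [Pi.mul_apply, gammaPDF]
    rcases le_or_gt 0 x with hx | hx
    · rw [← ENNReal.ofReal_mul (gammaPDFReal_nonneg hc one_pos x),
        gammaPDFReal_mul_self hc x, ENNReal.ofReal_mul hc.le]
    · rw [ENNReal.ofReal_of_nonpos hx.le, mul_zero]
      simp [gammaPDFReal, not_le.mpr hx]
  have hpdf2 : Measurable (gammaPDF (c+1) 1) := (measurable_gammaPDFReal (c+1) 1).ennreal_ofReal
  rw [lintegral_congr heq, lintegral_const_mul _ hpdf2, lintegral_gammaPDF_eq_one hc1 one_pos,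
    mul_one]


/-- Logistic-loss case of Lemma 1: with `X` the Polya-Gamma PG(c, 0) random variable
`X = (1/(2π²)) Σ_{d≥1} g_d/(d - 1/2)²` (indexed here by `d : ℕ`, term `g d/(d + 1/2)²`),
where `(g_d)` are i.i.d. Gamma(c, 1), for every `ỹ ∈ {0, 1}` and real `ω`:
`e^{cỹω}/(1 + e^{ω})^c = 2^{-c} · e^{κω} · E[exp(-X ω²/2)]` with `κ = c(ỹ - 1/2)`. -/
theorem logistic_pseudolikelihood_mixture {Ω : Type*} [MeasurableSpace Ω]
    (P : Measure Ω) [IsProbabilityMeasure P]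
    (c : ℝ) (hc : 0 < c) (g : ℕ → Ω → ℝ)
    (hmeas : ∀ d, Measurable (g d))
    (hindep : iIndepFun g P)
    (hdist : ∀ d, P.map (g d) = gammaMeasure c 1)
    (X : Ω → ℝ)
    (hX : ∀ w, X w = 1 / (2 * Real.pi ^ 2) * ∑' d : ℕ, g d w / ((d : ℝ) + 1 / 2) ^ 2)
    (ytil : ℝ) (hy : ytil = 0 ∨ ytil = 1) (ω : ℝ) :
    Real.exp (c * ytil * ω) / (1 + Real.exp ω) ^ c =
      (2 : ℝ) ^ (-c) * Real.exp (c * (ytil - 1 / 2) * ω) *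
        ∫ w, Real.exp (-X w * ω ^ 2 / 2) ∂P := by
  have hπ : (0:ℝ) < π := Real.pi_pos
  suffices hI : ∫ w, Real.exp (-X w * ω ^ 2 / 2) ∂P = Real.cosh (ω/2) ^ (-c) by
    rw [hI]
    have hch : (0:ℝ) < Real.cosh (ω/2) := Real.cosh_pos _
    have key : 1 + Real.exp ω = 2 * Real.cosh (ω/2) * Real.exp (ω/2) := by
      rw [Real.cosh_eq]
      rw [show (2:ℝ) * ((Real.exp (ω/2) + Real.exp (-(ω/2)))/2) * Real.exp (ω/2)
        = Real.exp (ω/2) * Real.exp (ω/2) + Real.exp (-(ω/2)) * Real.exp (ω/2) by ring,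
        ← Real.exp_add, ← Real.exp_add]
      norm_num
      ring
    rw [key]
    rw [Real.mul_rpow (by positivity) (Real.exp_pos _).le,
      Real.mul_rpow (by norm_num : (0:ℝ) ≤ 2) hch.le]
    rw [← Real.exp_mul, Real.rpow_neg (by norm_num : (0:ℝ) ≤ 2), Real.rpow_neg hch.le]
    have hexp : Real.exp (c*(ytil - 1/2)*ω) * Real.exp (ω/2*c) = Real.exp (c*ytil*ω) := by
      rw [← Real.exp_add]; ring_nf
    field_simp
    rw [← hexp]
    ring
  -- Now compute the integral.
  rcases eq_or_ne ω 0 with hω | hω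
  · subst hω
    simp only [ne_eq, OfNat.ofNat_ne_zero, not_false_eq_true, zero_pow, mul_zero, zero_div,
      Real.exp_zero, integral_const, measure_univ, ENNReal.toReal_one, probReal_univ, smul_eq_mul, mul_one]
    rw [Real.cosh_zero, Real.one_rpow]
  set t : ℕ → ℝ := fun d => ω^2 / (2 * (2*π^2) * ((d:ℝ)+1/2)^2) with ht
  have htnn : ∀ d, 0 ≤ t d := fun d => by positivity
  have hXw : ∀ w, -X w * ω ^ 2 / 2 = -∑' d, t d * g d w := by
    intro w
    rw [hX w]
    have h1 : ∀ d : ℕ, t d * g d w = ω^2/(2*(2*π^2)) * (g d w / ((d:ℝ)+1/2)^2) := by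
      intro d
      have hd : ((d:ℝ)+1/2) ≠ 0 := by positivity
      rw [ht]
      field_simp
    rw [tsum_congr h1, tsum_mul_left]
    ring
  have hnn : ∀ d, ∀ᵐ w ∂P, 0 ≤ g d w := by
    intro d
    have h0 : P.map (g d) (Set.Iio 0) = 0 := by
      rw [hdist d, gammaMeasure, withDensity_apply _ measurableSet_Iio]
      exact lintegral_gammaPDF_of_nonpos le_rfl
    rw [Measure.map_apply (hmeas d) measurableSet_Iio] at h0
    rw [ae_iff]
    convert h0 using 2
    ext w
    simp [not_le]
  have hnnall : ∀ᵐ w ∂P, ∀ d, 0 ≤ g d w := ae_all_iff.mpr hnn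
  -- summability of t
  have hts : Summable t := by
    have h0 : Summable (fun d : ℕ => 1/((d:ℝ)+1)^2) := by
      have h1 : Summable (fun n : ℕ => 1/(n:ℝ)^2) :=
        Real.summable_one_div_nat_pow.mpr one_lt_two
      have := (summable_nat_add_iff 1).mpr h1
      refine this.congr fun n => ?_
      push_cast
      ring
    refine Summable.of_nonneg_of_le htnn (fun d => ?_) (h0.mul_left (ω^2))
    rw [mul_one_div]
    have hπ3 : (3:ℝ) ≤ π := by linarith [Real.pi_gt_three]
    have hd0 : (0:ℝ) ≤ (d:ℝ) := Nat.cast_nonneg d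
    have hπ2 : (9:ℝ) ≤ π^2 := by nlinarith
    have hle : ((d:ℝ)+1)^2 ≤ 2*(2*π^2)*((d:ℝ)+1/2)^2 := by nlinarith [sq_nonneg ((d:ℝ)), mul_nonneg hd0 hd0]
    exact div_le_div_of_nonneg_left (by positivity) (by positivity) hle
  -- a.e. summability
  have hmeas2 : ∀ d : ℕ, Measurable fun w => ENNReal.ofReal (t d * g d w) :=
    fun d => ((hmeas d).const_mul _).ennreal_ofReal
  have hsum_ae : ∀ᵐ w ∂P, Summable (fun d => t d * g d w) := by
    have hlint : ∫⁻ w, ∑' d, ENNReal.ofReal (t d * g d w) ∂P ≠ ⊤ := by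
      rw [lintegral_tsum (fun d => (hmeas2 d).aemeasurable)]
      have heach : ∀ d : ℕ, ∫⁻ w, ENNReal.ofReal (t d * g d w) ∂P
          = ENNReal.ofReal (t d * c) := by
        intro d
        have h1 : ∀ w, ENNReal.ofReal (t d * g d w)
            = ENNReal.ofReal (t d) * ENNReal.ofReal (g d w) :=
          fun w => ENNReal.ofReal_mul (htnn d)
        simp_rw [h1]
        rw [lintegral_const_mul _ (hmeas d).ennreal_ofReal,
          ← lintegral_map ENNReal.measurable_ofReal (hmeas d), hdist d,
          gamma_mean_lintegral hc, ← ENNReal.ofReal_mul (htnn d)]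
      rw [tsum_congr heach,
        ← ENNReal.ofReal_tsum_of_nonneg (fun d => mul_nonneg (htnn d) hc.le) (hts.mul_right c)]
      exact ENNReal.ofReal_ne_top
    have hae := ae_lt_top (Measurable.ennreal_tsum hmeas2) hlint
    filter_upwards [hae, hnnall] with w hw hwnn
    have hs : Summable fun d => (ENNReal.ofReal (t d * g d w)).toReal :=
      ENNReal.summable_toReal hw.ne
    refine hs.congr fun d => ?_
    rw [ENNReal.toReal_ofReal (mul_nonneg (htnn d) (hwnn d))]
  -- Laplace transform of each coordinate
  have hmgf : ∀ d, ∫ w, Real.exp (-(t d * g d w)) ∂P = (1 + t d) ^ (-c) := by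
    intro d
    have h1 : ∫ w, Real.exp (-(t d * g d w)) ∂P
        = ∫ x, Real.exp (-(t d * x)) ∂(P.map (g d)) := by
      rw [integral_map (hmeas d).aemeasurable]
      exact Continuous.aestronglyMeasurable (by continuity)
    rw [h1, hdist d, gamma_laplace hc (htnn d)]
  -- finite products
  have hfin : ∀ n, ∫ w, Real.exp (-(∑ d ∈ Finset.range n, t d * g d w)) ∂P
      = ∏ d ∈ Finset.range n, (1 + t d) ^ (-c) := by
    intro n
    set Y : ℕ → Ω → ℝ := fun d w => -(t d * g d w) with hY
    have hYmeas : ∀ d, Measurable (Y d) := fun d => ((hmeas d).const_mul (t d)).neg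
    have hYindep : iIndepFun Y P :=
      hindep.comp (fun d x => -(t d * x)) (fun d => (measurable_id.const_mul (t d)).neg)
    have hsum := hYindep.mgf_sum hYmeas (Finset.range n) (t := 1)
    simp only [mgf, one_mul] at hsum
    have hL : ∫ w, Real.exp (-(∑ d ∈ Finset.range n, t d * g d w)) ∂P
        = ∫ w, Real.exp ((∑ d ∈ Finset.range n, Y d) w) ∂P := by
      congr 1
      ext w
      simp [hY, Finset.sum_apply, Finset.sum_neg_distrib]
    rw [hL, hsum]
    exact Finset.prod_congr rfl fun d _ => hmgf d
  -- dominated convergence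
  have hdom : Tendsto (fun n => ∫ w, Real.exp (-(∑ d ∈ Finset.range n, t d * g d w)) ∂P) atTop
      (𝓝 (∫ w, Real.exp (-X w * ω ^ 2 / 2) ∂P)) := by
    apply tendsto_integral_of_dominated_convergence (bound := fun _ => (1:ℝ))
    · intro n
      exact (Finset.measurable_sum (Finset.range n)
        (fun d _ => (hmeas d).const_mul (t d))).neg.exp.aestronglyMeasurable
    · exact integrable_const 1
    · intro n
      filter_upwards [hnnall] with w hw
      rw [Real.norm_eq_abs, abs_of_pos (Real.exp_pos _)]
      rw [Real.exp_le_one_iff]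
      simp only [neg_nonpos]
      exact Finset.sum_nonneg fun d _ => mul_nonneg (htnn d) (hw d)
    · filter_upwards [hsum_ae] with w hw
      have h1 : Tendsto (fun n => ∑ d ∈ Finset.range n, t d * g d w) atTop
          (𝓝 (∑' d, t d * g d w)) := hw.hasSum.tendsto_sum_nat
      have h2 := (Real.continuous_exp.tendsto _).comp h1.neg
      rw [hXw w]
      exact h2
  -- product limit
  have hprod : Tendsto (fun n => ∏ d ∈ Finset.range n, (1 + t d) ^ (-c)) atTop
      (𝓝 (Real.cosh (ω/2) ^ (-c))) := by
    have h1 : Tendsto (fun n => ∏ d ∈ Finset.range n, (1 + t d)) atTop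
        (𝓝 (Real.cosh (ω/2))) := by
      have hy : ω/(2*π) ≠ 0 := by
        simp only [ne_eq, div_eq_zero_iff]
        push_neg
        exact ⟨hω, by positivity⟩
      have h2 := tendsto_cosh_prod (ω/(2*π)) hy
      have h3 : π * (ω/(2*π)) = ω/2 := by field_simp
      rw [h3] at h2
      refine h2.congr fun n => Finset.prod_congr rfl fun d _ => ?_
      rw [ht]
      have hd : ((d:ℝ)+1/2) ≠ 0 := by positivity
      have : 2*(d:ℝ)+1 = 2*((d:ℝ)+1/2) := by ring
      rw [this]
      field_simp
      ring
    have h2 := h1.rpow_const (p := -c) (Or.inl (ne_of_gt (Real.cosh_pos _)))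
    refine h2.congr fun n => ?_
    rw [← Real.finset_prod_rpow _ _ (fun d _ => by positivity) (-c)]
  rw [← funext hfin] at hprod
  exact tendsto_nhds_unique hdom hprod
end

section
/- For every real number a > 0, the pushforward under the map x ↦ 1/x of the probability measure on (0, ∞) whose density with respect to Lebesgue measure is λ ↦ (e^{a}/√(2π)) · λ^{−1/2} · exp(−(λ + a²/λ)/2) is the probability measure on (0, ∞) whose density with respect to Lebesgue measure is γ ↦ (2πγ³)^{−1/2} · exp(−a²(γ − 1/a)²/(2γ)). -/
open MeasureTheory Real

/-- The pushforward under `x ↦ 1/x` of the generalized inverse Gaussian distribution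
`GIG(1/2, 1, a²)` (density `(e^a/√(2π)) λ^{-1/2} exp(-(λ + a²/λ)/2)` on `(0, ∞)`)
is the inverse Gaussian distribution `IG(1/a, 1)`
(density `(2πγ³)^{-1/2} exp(-a²(γ - 1/a)²/(2γ))` on `(0, ∞)`). -/
theorem gig_reciprocal_is_inverse_gaussian (a : ℝ) (ha : 0 < a) :
    Measure.map (fun x : ℝ => 1 / x)
      ((volume.restrict (Set.Ioi (0 : ℝ))).withDensity fun l =>
        ENNReal.ofReal
          (Real.exp a / Real.sqrt (2 * Real.pi) * l ^ (-(1 : ℝ) / 2) *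
            Real.exp (-(l + a ^ 2 / l) / 2))) =
      (volume.restrict (Set.Ioi (0 : ℝ))).withDensity fun γ =>
        ENNReal.ofReal
          ((2 * Real.pi * γ ^ 3) ^ (-(1 : ℝ) / 2) *
            Real.exp (-a ^ 2 * (γ - 1 / a) ^ 2 / (2 * γ))) := by
  have hφ : Measurable fun x : ℝ => 1 / x := by
    simp only [one_div]; exact measurable_inv
  ext s hs
  rw [Measure.map_apply hφ hs, withDensity_apply _ (hφ hs), withDensity_apply _ hs,
    Measure.restrict_restrict (hφ hs), Measure.restrict_restrict hs]
  have hset : (fun x : ℝ => 1 / x) ⁻¹' s ∩ Set.Ioi 0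
      = (fun x : ℝ => 1 / x) '' (s ∩ Set.Ioi 0) := by
    ext x
    simp only [Set.mem_inter_iff, Set.mem_preimage, Set.mem_Ioi, Set.mem_image]
    constructor
    · rintro ⟨hxs, hx⟩
      exact ⟨1 / x, ⟨hxs, by positivity⟩, by field_simp⟩
    · rintro ⟨y, ⟨hys, hy⟩, rfl⟩
      refine ⟨by simpa [one_div_one_div] using hys, by positivity⟩
  rw [hset]
  have hderiv : ∀ x ∈ s ∩ Set.Ioi (0:ℝ),
      HasFDerivWithinAt (fun x : ℝ => 1 / x)
        ((1 : ℝ →L[ℝ] ℝ).smulRight (-(x ^ 2)⁻¹)) (s ∩ Set.Ioi 0) x := by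
    intro x hx
    have hx0 : x ≠ 0 := ne_of_gt hx.2
    have h2 : HasDerivWithinAt (fun x : ℝ => 1 / x) (-(x^2)⁻¹) (s ∩ Set.Ioi 0) x := by
      simpa [one_div] using (hasDerivAt_inv hx0).hasDerivWithinAt (s := s ∩ Set.Ioi 0)
    exact h2.hasFDerivWithinAt
  have hinj : Set.InjOn (fun x : ℝ => 1 / x) (s ∩ Set.Ioi 0) := by
    intro x hx y hy h
    have hx0 : x ≠ 0 := ne_of_gt hx.2
    have hy0 : y ≠ 0 := ne_of_gt hy.2
    field_simp at h
    linarith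
  rw [lintegral_image_eq_lintegral_abs_det_fderiv_mul volume (hs.inter measurableSet_Ioi)
    hderiv hinj]
  apply setLIntegral_congr_fun (hs.inter measurableSet_Ioi)
  intro x hx
  dsimp only
  have hx0 : (0:ℝ) < x := hx.2
  have hπ : (0:ℝ) < 2 * Real.pi := by positivity
  rw [ContinuousLinearMap.det_smulRight, ContinuousLinearMap.one_apply, one_mul, ← ENNReal.ofReal_mul (abs_nonneg _)]
  congr 1
  have habs : |(-(x ^ 2)⁻¹ : ℝ)| = (x^2)⁻¹ := by
    rw [abs_neg, abs_inv, abs_of_pos (by positivity)]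
  rw [habs]
  -- rewrite rpow expressions
  have h1 : (1/x : ℝ) ^ (-(1:ℝ)/2) = x ^ ((1:ℝ)/2) := by
    rw [one_div, ← Real.rpow_neg_one x, ← Real.rpow_mul hx0.le]
    norm_num
  have h2 : (2 * Real.pi * x^3 : ℝ) ^ (-(1:ℝ)/2)
      = (Real.sqrt (2 * Real.pi))⁻¹ * x ^ (-(3:ℝ)/2) := by
    rw [Real.mul_rpow hπ.le (by positivity), ← Real.rpow_natCast x 3,
      ← Real.rpow_mul hx0.le, show (-(1:ℝ)/2) = -(1/2) by norm_num, Real.rpow_neg hπ.le,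
      Real.sqrt_eq_rpow]
    norm_num
  have h3 : x ^ (-(3:ℝ)/2) = (x^2)⁻¹ * x ^ ((1:ℝ)/2) := by
    rw [← Real.rpow_natCast x 2, ← Real.rpow_neg hx0.le, ← Real.rpow_add hx0]
    norm_num
  have hexp : Real.exp (-a ^ 2 * (x - 1 / a) ^ 2 / (2 * x))
      = Real.exp a * Real.exp (-(1/x + a ^ 2 / (1/x)) / 2) := by
    rw [← Real.exp_add]
    congr 1
    field_simp
    ring
  rw [h1, h2, h3, hexp]
  have hs2π : Real.sqrt (2 * Real.pi) ≠ 0 := by positivity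
  field_simp
end
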